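/- Let A be a pre-Lie ring of cardinality p^n (p prime) that is both left nilpotent and right nilpotent. Then A^{[(n+1)^{n+1}]} = 0, i.e., A is strongly nilpotent with nilpotency index at most (n+1)^{n+1}. -/

import Mathlib

class PreLieRing (A : Type*) extends AddCommGroup A where
  mul : A → A → A
  mul_add : ∀ a b c : A, mul a (b + c) = mul a b + mul a c
  add_mul : ∀ a b c : A, mul (a + b) c = mul a c + mul b c
  left_symm : ∀ x y z : A,
    mul (mul x y) z - mul x (mul y z) = mul (mul y x) z - mul y (mul x z)

namespace PreLieRing

variable {A : Type*} [PreLieRing A]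

/-- The additive subgroup generated by products `a · b` with `a ∈ S`, `b ∈ T`. -/
def subMulSet (S T : Set A) : AddSubgroup A :=
  AddSubgroup.closure {x | ∃ a ∈ S, ∃ b ∈ T, x = mul a b}

def subMul (S T : AddSubgroup A) : AddSubgroup A := subMulSet (S : Set A) (T : Set A)

/-- `leftPow A m` is `A^{m+1}` of the left chain `A^1 = A`, `A^{i+1} = A·A^i`. -/
def leftPow (A : Type*) [PreLieRing A] : ℕ → AddSubgroup A
  | 0 => ⊤
  | m + 1 => subMul ⊤ (leftPow A m)

/-- `leftIdx A m = A^m` (paper indexing, junk value `A` at `m = 0`). -/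
def leftIdx (A : Type*) [PreLieRing A] (m : ℕ) : AddSubgroup A := leftPow A (m - 1)

/-- `rightPow A m` is `A^{(m+1)}` of the right chain `A^{(1)} = A`, `A^{(i+1)} = A^{(i)}·A`. -/
def rightPow (A : Type*) [PreLieRing A] : ℕ → AddSubgroup A
  | 0 => ⊤
  | m + 1 => subMul (rightPow A m) ⊤

def rightIdx (A : Type*) [PreLieRing A] (m : ℕ) : AddSubgroup A := rightPow A (m - 1)

/-- `strongPow A m` is `A^{[m+1]}` of the chain `A^{[1]} = A`,
`A^{[i+1]} = Σ_{j=1}^{i} A^{[j]}·A^{[i+1-j]}`. -/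
def strongPow (A : Type*) [PreLieRing A] : ℕ → AddSubgroup A
  | 0 => ⊤
  | m + 1 => ⨆ j : Fin (m + 1), subMul (strongPow A j) (strongPow A (m - j))
  termination_by m => m
  decreasing_by
  · exact j.isLt
  · exact Nat.lt_succ_of_le (Nat.sub_le m j)

def strongIdx (A : Type*) [PreLieRing A] (m : ℕ) : AddSubgroup A := strongPow A (m - 1)

/-- An ideal of a pre-Lie ring: an additive subgroup absorbing multiplication
on both sides. -/
def IsIdeal (I : AddSubgroup A) : Prop :=
  (∀ a : A, ∀ i ∈ I, mul i a ∈ I) ∧ (∀ a : A, ∀ i ∈ I, mul a i ∈ I)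

end PreLieRing

namespace PreLieRing

variable {A : Type*} [PreLieRing A]

-- basic lemmas
def Lmul (x : A) : A →+ A := AddMonoidHom.mk' (mul x) (mul_add x)

lemma mem_subMul {S T : AddSubgroup A} {a b : A} (ha : a ∈ S) (hb : b ∈ T) :
    mul a b ∈ subMul S T :=
  AddSubgroup.subset_closure ⟨a, ha, b, hb, rfl⟩

lemma subMul_le {S T U : AddSubgroup A}
    (h : ∀ a ∈ S, ∀ b ∈ T, mul a b ∈ U) : subMul S T ≤ U := by
  apply (AddSubgroup.closure_le _).mpr
  rintro x ⟨a, ha, b, hb, rfl⟩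
  exact h a ha b hb

lemma subMul_mono {S S' T T' : AddSubgroup A} (hS : S ≤ S') (hT : T ≤ T') :
    subMul S T ≤ subMul S' T' :=
  subMul_le fun a ha b hb => mem_subMul (hS ha) (hT hb)

lemma mul_left_mem {S T U : AddSubgroup A} {x : A}
    (h : ∀ a ∈ S, ∀ b ∈ T, mul x (mul a b) ∈ U) :
    ∀ w ∈ subMul S T, mul x w ∈ U := by
  intro w hw
  have h2 : subMul S T ≤ U.comap (Lmul x) := subMul_le fun a ha b hb => h a ha b hb
  exact h2 hw

lemma expand (x y z : A) :
    mul x (mul y z) = (mul (mul x y) z - mul (mul y x) z) + mul y (mul x z) := by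
  have h := left_symm x y z
  have h2 : mul x (mul y z) = mul (mul x y) z - (mul (mul y x) z - mul y (mul x z)) := by
    rw [← h]; abel
  rw [h2]; abel

lemma strongPow_succ (m : ℕ) :
    strongPow A (m + 1) = ⨆ j : Fin (m + 1), subMul (strongPow A j) (strongPow A (m - j)) := by
  rw [strongPow]



lemma strongPow_zero : strongPow A 0 = ⊤ := by rw [strongPow]

lemma leftPow_succ_le (i : ℕ) : leftPow A (i + 1) ≤ leftPow A i := by
  induction i with
  | zero => exact le_top
  | succ i ih => exact subMul_mono le_rfl ih

lemma leftPow_le {i j : ℕ} (h : i ≤ j) : leftPow A j ≤ leftPow A i :=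
  antitone_nat_of_succ_le leftPow_succ_le h

lemma rightPow_succ_le (i : ℕ) : rightPow A (i + 1) ≤ rightPow A i := by
  induction i with
  | zero => exact le_top
  | succ i ih => exact subMul_mono ih le_rfl

lemma rightPow_le {i j : ℕ} (h : i ≤ j) : rightPow A j ≤ rightPow A i :=
  antitone_nat_of_succ_le rightPow_succ_le h

/-- right powers absorb left multiplication -/
lemma mul_rightPow_mem : ∀ i : ℕ, ∀ x : A, ∀ w ∈ rightPow A i, mul x w ∈ rightPow A i := by
  intro i
  induction i with
  | zero => intro x w _; exact AddSubgroup.mem_top _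
  | succ i ih =>
    intro x w hw
    refine mul_left_mem (fun y hy z _ => ?_) w hw
    rw [expand x y z]
    refine AddSubgroup.add_mem _ (AddSubgroup.sub_mem _ ?_ ?_) ?_
    · exact mem_subMul (ih x y hy) (AddSubgroup.mem_top z)
    · have hyx : mul y x ∈ rightPow A i :=
        rightPow_succ_le i (mem_subMul hy (AddSubgroup.mem_top x))
      exact mem_subMul hyx (AddSubgroup.mem_top z)
    · exact mem_subMul hy (AddSubgroup.mem_top _)

lemma subMul_le_strongPow {m j : ℕ} (hj : j < m + 1) :
    subMul (strongPow A j) (strongPow A (m - j)) ≤ strongPow A (m + 1) := by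
  rw [strongPow_succ]
  have h := le_iSup (fun j : Fin (m + 1) => subMul (strongPow A ↑j) (strongPow A (m - ↑j)))
    (⟨j, hj⟩ : Fin (m + 1))
  simpa only [] using h

lemma strongPow_succ_le_of {m : ℕ} {U : AddSubgroup A}
    (h : ∀ j ≤ m, subMul (strongPow A j) (strongPow A (m - j)) ≤ U) :
    strongPow A (m + 1) ≤ U := by
  rw [strongPow_succ]
  exact iSup_le fun j => h j (Nat.lt_succ_iff.mp j.isLt)

lemma strongPow_succ_le : ∀ i, strongPow A (i + 1) ≤ strongPow A i := by
  intro i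
  induction i using Nat.strong_induction_on with
  | _ i ih =>
    match i with
    | 0 => rw [strongPow_zero]; exact le_top
    | i + 1 =>
      apply strongPow_succ_le_of
      intro j hj
      cases j with
      | zero =>
        have h1 : strongPow A (i + 1 - 0) ≤ strongPow A i := ih i (Nat.lt_succ_self i)
        exact le_trans (subMul_mono le_rfl h1) (subMul_le_strongPow (Nat.succ_pos i))
      | succ jv =>
        have h2 : i + 1 - (jv + 1) = i - jv := by omega
        rw [h2]
        exact le_trans (subMul_mono (ih jv (by omega)) le_rfl)
          (subMul_le_strongPow (by omega : jv < i + 1))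

lemma strongPow_le {i j : ℕ} (h : i ≤ j) : strongPow A j ≤ strongPow A i :=
  antitone_nat_of_succ_le strongPow_succ_le h



/-- Main lemma: if `A^{n+1} = 0` (left), then `A^{[(n+1)^m + 1]} ⊆ A^{(m+1)}` for all `m`. -/
lemma strong_le_right (n : ℕ) (hL : leftPow A n = ⊥) :
    ∀ m : ℕ, strongPow A ((n + 1) ^ m) ≤ rightPow A m := by
  intro m
  induction m with
  | zero =>
    rw [pow_zero]
    exact le_top
  | succ m ihm =>
    set t := (n + 1) ^ m with ht
    have htpos : 1 ≤ t := Nat.one_le_pow _ _ (Nat.succ_pos n)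
    -- the nested chain Y c = A·(A·(⋯(A·A^{[t+1]})))
    let Y : ℕ → AddSubgroup A := fun c => Nat.rec (strongPow A t) (fun _ ih => subMul ⊤ ih) c
    have hY0 : Y 0 = strongPow A t := rfl
    have hYsucc : ∀ c, Y (c + 1) = subMul ⊤ (Y c) := fun c => rfl
    have hYle : ∀ c, Y c ≤ leftPow A c := by
      intro c
      induction c with
      | zero => exact le_top
      | succ c ih => exact subMul_mono le_rfl ih
    have J : ∀ c, strongPow A (t * (c + 1)) ≤ rightPow A (m + 1) ⊔ Y c := by
      intro c
      induction c with
      | zero =>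
        have e : t * (0 + 1) = t := by omega
        rw [e, ← hY0]
        exact le_sup_right
      | succ c ihc =>
        have hN : t * (c + 1 + 1) = (t * (c + 1 + 1) - 1) + 1 := by
          have : 1 ≤ t * (c + 1 + 1) := Nat.one_le_iff_ne_zero.mpr (by positivity)
          omega
        rw [hN]
        apply strongPow_succ_le_of
        intro j hj
        apply subMul_le
        intro u hu v hv
        by_cases hjt : t ≤ j
        · -- left factor is deep: lands in rightPow (m+1)
          have hu' : u ∈ rightPow A m := ihm (strongPow_le hjt hu)
          exact AddSubgroup.mem_sup_left
            (mem_subMul hu' (AddSubgroup.mem_top v) : mul u v ∈ rightPow A (m + 1))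
        · -- left factor shallow: right factor is still deep
          push_neg at hjt
          have harith : t * (c + 1) ≤ t * (c + 1 + 1) - 1 - j := by
            have h2 : t * (c + 1 + 1) = t * (c + 1) + t := by ring
            omega
          have hv' : v ∈ rightPow A (m + 1) ⊔ Y c := ihc (strongPow_le harith hv)
          obtain ⟨v1, h1, v2, h2, rfl⟩ := AddSubgroup.mem_sup.mp hv'
          rw [mul_add u v1 v2]
          refine AddSubgroup.add_mem _ (AddSubgroup.mem_sup_left ?_) (AddSubgroup.mem_sup_right ?_)
          · exact mul_rightPow_mem (m + 1) u v1 h1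
          · rw [hYsucc]
            exact mem_subMul (AddSubgroup.mem_top u) h2
    have hfin := J n
    have hYn : Y n ≤ ⊥ := hL ▸ hYle n
    have : strongPow A (t * (n + 1)) ≤ rightPow A (m + 1) :=
      hfin.trans (sup_le le_rfl (hYn.trans bot_le))
    rw [pow_succ]
    exact this

/-- descending chains of subgroups in a group of order `p^n` reach `⊥` by step `n`. -/
lemma chain_bot [Fintype A] (p n : ℕ) (hp : p.Prime) (hcard : Nat.card A = p ^ n)
    (f : ℕ → AddSubgroup A)
    (htop : f 0 = ⊤)
    (hsucc : ∀ i, f (i + 1) ≤ f i)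
    (hstall : ∀ i, f (i + 1) = f i → f (i + 2) = f (i + 1))
    (hbot : ∃ k, f k = ⊥) : f n = ⊥ := by
  have hmono : ∀ {a b : ℕ}, a ≤ b → f b ≤ f a := fun h => antitone_nat_of_succ_le hsucc h
  have hstall' : ∀ i, f (i + 1) = f i → f i = ⊥ := by
    intro i h
    obtain ⟨k, hk⟩ := hbot
    have const : ∀ j, f (i + j) = f i ∧ f (i + j + 1) = f (i + j) := by
      intro j
      induction j with
      | zero => exact ⟨rfl, h⟩
      | succ j ih => exact ⟨ih.2.trans ih.1, hstall _ ih.2⟩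
    rcases le_or_gt i k with hik | hik
    · have e : i + (k - i) = k := by omega
      have := (const (k - i)).1
      rw [e, hk] at this
      exact this.symm
    · exact le_antisymm (hk ▸ hmono hik.le) bot_le
  have key : ∀ i, Nat.card (f i) ∣ p ^ (n - i) := by
    intro i
    induction i with
    | zero =>
      rw [htop, Nat.sub_zero, ← hcard]
      exact dvd_of_eq (AddSubgroup.card_top)
    | succ i ih =>
      by_cases h : f (i + 1) = f i
      · rw [h.trans (hstall' i h)]
        simpa using one_dvd _
      · have hlt : f (i + 1) < f i := lt_of_le_of_ne (hsucc i) h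
        have hdvd : Nat.card (f (i + 1)) ∣ Nat.card (f i) :=
          AddSubgroup.card_dvd_of_le hlt.le
        have hcard_lt : Nat.card (f (i + 1)) < Nat.card (f i) := by
          have hss : ((f (i + 1) : Set A)) ⊂ (f i : Set A) := SetLike.coe_ssubset_coe.mpr hlt
          rw [show Nat.card (f (i + 1)) = ((f (i + 1) : Set A)).ncard from
            Nat.card_coe_set_eq _, show Nat.card (f i) = ((f i : Set A)).ncard from
            Nat.card_coe_set_eq _]
          exact Set.ncard_lt_ncard hss (Set.toFinite _)
        have hd1 : Nat.card (f (i + 1)) ∣ p ^ (n - i) := hdvd.trans ih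
        obtain ⟨b, hb, hbe⟩ := (Nat.dvd_prime_pow hp).mp hd1
        have hle : Nat.card (f i) ≤ p ^ (n - i) :=
          Nat.le_of_dvd (pow_pos hp.pos _) ih
        have hpos : 0 < Nat.card (f (i + 1)) := Nat.card_pos
        have hbne : b ≠ n - i := by
          intro hcontra
          rw [hcontra] at hbe
          omega
        have hble : b ≤ n - (i + 1) := by
          rcases Nat.eq_zero_or_pos (n - i) with h0 | h0
          · exfalso
            have hfi : Nat.card (f i) = 1 := by
              have h1 := ih
              rw [h0, pow_zero] at h1
              exact Nat.dvd_one.mp h1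
            omega
          · omega
        exact hbe ▸ pow_dvd_pow p hble
  have := key n
  rw [Nat.sub_self, pow_zero] at this
  exact AddSubgroup.eq_bot_of_card_eq _ (Nat.eq_one_of_dvd_one this)


end PreLieRing


open PreLieRing in
/-- a pre-Lie ring of cardinality `p^n` that is both left and right
nilpotent satisfies `A^{[(n+1)^(n+1)]} = 0`. -/
theorem strongly_nilpotent_bound (p n : ℕ) (hp : p.Prime) (A : Type*) [PreLieRing A]
    [Fintype A] (hcard : Nat.card A = p ^ n)
    (hl : ∃ m : ℕ, leftIdx A m = ⊥) (hr : ∃ m : ℕ, rightIdx A m = ⊥) :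
    strongIdx A ((n + 1) ^ (n + 1)) = ⊥ := by
  classical
  have hL : leftPow A n = ⊥ := by
    refine chain_bot p n hp hcard (leftPow A) rfl leftPow_succ_le ?_ ?_
    · intro i h
      exact congrArg (fun S => subMul (⊤ : AddSubgroup A) S) h
    · obtain ⟨m, hm⟩ := hl
      exact ⟨m - 1, hm⟩
  have hR : rightPow A n = ⊥ := by
    refine chain_bot p n hp hcard (rightPow A) rfl rightPow_succ_le ?_ ?_
    · intro i h
      exact congrArg (fun S => subMul S (⊤ : AddSubgroup A)) h
    · obtain ⟨m, hm⟩ := hr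
      exact ⟨m - 1, hm⟩
  rcases Nat.eq_zero_or_pos n with rfl | hn
  · show strongPow A ((0 + 1) ^ (0 + 1) - 1) = ⊥
    have e : (0 + 1) ^ (0 + 1) - 1 = 0 := by norm_num
    rw [e, strongPow_zero]
    exact hL
  · have h1 : strongPow A ((n + 1) ^ n) ≤ rightPow A n := strong_le_right n hL n
    have harith : (n + 1) ^ n ≤ (n + 1) ^ (n + 1) - 1 := by
      have e : (n + 1) ^ (n + 1) = (n + 1) ^ n * (n + 1) := pow_succ _ _
      have h2 : (n + 1) ^ n * 2 ≤ (n + 1) ^ n * (n + 1) := Nat.mul_le_mul_left _ (by omega)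
      have h3 : 1 ≤ (n + 1) ^ n := Nat.one_le_pow _ _ (by omega)
      omega
    have h2 : strongPow A ((n + 1) ^ (n + 1) - 1) ≤ strongPow A ((n + 1) ^ n) :=
      strongPow_le harith
    show strongPow A ((n + 1) ^ (n + 1) - 1) = ⊥
    exact le_bot_iff.mp (h2.trans (h1.trans (le_of_eq hR)))
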